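/- Let X be a set of feasible routing solutions, let B be a budget, and let (s₁,t₁,d₁,f₁) and (s₂,t₂,d₂,f₂) be two tuples such that, for i = 1,2: tᵢ ≥ 0, (dᵢ,fᵢ) ∈ X is lower-level optimal for (sᵢ,tᵢ), and the budget constraint sᵢ·fᵢ − tᵢ·dᵢ = B holds; assume 0 ≤ s₁ < 1, 0 ≤ s₂ ≤ 1, and (s₂,t₂) ≠ (0,0). Then the driven distance of the first solution is strictly smaller than that of the second if and only if the first freight forwarder's total cost is strictly larger, i.e., d₁ < d₂ ⟺ (1+t₁)·d₁ + (1−s₁)·f₁ > (1+t₂)·d₂ + (1−s₂)·f₂. -/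
import Mathlib


/-- Proposition 1: For a given budget `B` and two feasible policy–solution
tuples `(sᵢ,tᵢ,dᵢ,fᵢ)` satisfying the budget constraint `sᵢ·fᵢ − tᵢ·dᵢ = B`,
with `0 ≤ s₁ < 1`, `0 ≤ s₂ ≤ 1`, `tᵢ ≥ 0`, `(s₂,t₂) ≠ (0,0)`, the driven
distance of the first solution is strictly smaller than that of the second iff
the first freight forwarder's total cost is strictly larger. -/
theorem stmt2 (X : Set (ℝ × ℝ)) (hX : X.Nonempty)
    (hXnn : ∀ p ∈ X, 0 ≤ p.1 ∧ 0 ≤ p.2)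
    (B : ℝ)
    (s₁ t₁ d₁ f₁ s₂ t₂ d₂ f₂ : ℝ)
    (hs₁ : 0 ≤ s₁) (hs₁' : s₁ < 1) (ht₁ : 0 ≤ t₁)
    (hs₂ : 0 ≤ s₂) (hs₂' : s₂ ≤ 1) (ht₂ : 0 ≤ t₂)
    (hne₂ : (s₂, t₂) ≠ ((0 : ℝ), (0 : ℝ)))
    (hmem₁ : (d₁, f₁) ∈ X)
    (hopt₁ : ∀ p ∈ X,
      (1 + t₁) * d₁ + (1 - s₁) * f₁ ≤ (1 + t₁) * p.1 + (1 - s₁) * p.2)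
    (hmem₂ : (d₂, f₂) ∈ X)
    (hopt₂ : ∀ p ∈ X,
      (1 + t₂) * d₂ + (1 - s₂) * f₂ ≤ (1 + t₂) * p.1 + (1 - s₂) * p.2)
    (hB₁ : s₁ * f₁ - t₁ * d₁ = B)
    (hB₂ : s₂ * f₂ - t₂ * d₂ = B) :
    d₁ < d₂ ↔
      (1 + t₁) * d₁ + (1 - s₁) * f₁ > (1 + t₂) * d₂ + (1 - s₂) * f₂ := by
  have h1 := hopt₁ (d₂, f₂) hmem₂
  have h2 := hopt₂ (d₁, f₁) hmem₁
  simp only [] at h1 h2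
  have hst : 0 < s₂ + t₂ := by
    rcases lt_or_eq_of_le hs₂ with h | h
    · linarith
    rcases lt_or_eq_of_le ht₂ with h' | h'
    · linarith
    · exact absurd (by rw [← h, ← h']) hne₂
  constructor
  · intro hd
    rcases lt_or_eq_of_le hs₂' with h | h
    · nlinarith [mul_pos (sub_pos.mpr h) (sub_pos.mpr hd)]
    · nlinarith
  · intro hc
    by_contra hd
    push_neg at hd
    nlinarith [mul_nonneg (sub_nonneg.mpr hs₁'.le) (sub_nonneg.mpr hd),
      mul_nonneg hs₂ (sub_nonneg.mpr hd)]
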